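/- Let g : ℝ → ℝ be 2π-periodic, continuously differentiable with Lipschitz continuous derivative, and satisfy g(θ+π) = −g(θ) for all θ ∈ ℝ. Then there exists δ₀ > 0 such that for every δ with 0 < δ ≤ δ₀, the function h(θ) = 1/2 + δ g(θ) is the support function of a convex body of constant width 1, namely of K = ⋂_{θ∈ℝ} {x ∈ ℝ² : x·u(θ) ≤ h(θ)}. -/

import Mathlib

open Real

/-- The direction vector `u θ = (cos θ, sin θ)` in the Euclidean plane. -/
noncomputable def u (θ : ℝ) : EuclideanSpace ℝ (Fin 2) := !₂[Real.cos θ, Real.sin θ]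

/-- `h` is the support function of `K`: for every direction `θ`,
`h θ` is the maximum of `x · u θ` over `x ∈ K`. -/
def IsSupportFn (K : Set (EuclideanSpace ℝ (Fin 2))) (h : ℝ → ℝ) : Prop :=
  ∀ θ : ℝ, IsGreatest ((fun x => (inner ℝ x (u θ) : ℝ)) '' K) (h θ)

lemma inner_u (x : EuclideanSpace ℝ (Fin 2)) (θ : ℝ) :
    (inner ℝ x (u θ) : ℝ) = x 0 * Real.cos θ + x 1 * Real.sin θ := by
  simp [u, PiLp.inner_apply, Fin.sum_univ_two]; ring

/-- Jordan-type inequality on `[0, π]`. -/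
lemma jordan {s : ℝ} (h0 : 0 ≤ s) (h1 : s ≤ π) : 2 / π * min s (π - s) ≤ Real.sin s := by
  rcases le_total s (π/2) with h|h
  · rw [min_eq_left (by linarith)]
    exact Real.mul_le_sin h0 h
  · rw [min_eq_right (by linarith), ← Real.sin_pi_sub]
    exact Real.mul_le_sin (by linarith) (by linarith)

/-- Key estimate for a Lipschitz, bounded, π-antiperiodic function. -/
lemma anti_bound (G : ℝ → ℝ) (L M : ℝ)
    (hL : ∀ x y, |G x - G y| ≤ L * |x - y|)
    (hM : ∀ x, |G x| ≤ M) (hA : ∀ x, G (x + π) = -G x)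
    {s : ℝ} (h0 : 0 ≤ s) (h1 : s ≤ π) :
    |G s - G 0 * Real.cos s| ≤ (L + M * π / 4) * min s (π - s) := by
  have hM0 : 0 ≤ M := le_trans (abs_nonneg _) (hM 0)
  rcases le_total s (π/2) with hc|hc
  · rw [min_eq_left (by linarith)]
    have e1 : |G s - G 0| ≤ L * s := by simpa [abs_of_nonneg h0] using hL s 0
    have e2 : 1 - Real.cos s ≤ s^2/2 := by
      have := Real.one_sub_sq_div_two_le_cos (x := s); linarith
    have e2' : 0 ≤ 1 - Real.cos s := by have := Real.cos_le_one s; linarith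
    have e3 : |G 0 * (1 - Real.cos s)| ≤ M * (s^2/2) := by
      rw [abs_mul, abs_of_nonneg e2']
      exact mul_le_mul (hM 0) e2 e2' hM0
    have key : G s - G 0 * Real.cos s = (G s - G 0) + G 0 * (1 - Real.cos s) := by ring
    calc |G s - G 0 * Real.cos s| ≤ |G s - G 0| + |G 0 * (1 - Real.cos s)| := by
          rw [key]; exact abs_add_le _ _
      _ ≤ L * s + M * (s^2/2) := add_le_add e1 e3
      _ ≤ (L + M * π / 4) * s := by
          nlinarith [mul_nonneg (mul_nonneg hM0 h0) (by linarith : (0:ℝ) ≤ π/2 - s)]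
  · rw [min_eq_right (by linarith)]
    have hGpi : G π = -G 0 := by simpa using hA 0
    have e1 : |G s - G π| ≤ L * (π - s) := by
      have h := hL s π
      rwa [show |s - π| = π - s by rw [abs_of_nonpos (by linarith)]; ring] at h
    have e2 : 1 + Real.cos s ≤ (π - s)^2/2 := by
      have h := Real.one_sub_sq_div_two_le_cos (x := π - s)
      rw [Real.cos_pi_sub] at h; linarith
    have e2' : 0 ≤ 1 + Real.cos s := by have := Real.neg_one_le_cos s; linarith
    have e3 : |(-G 0) * (1 + Real.cos s)| ≤ M * ((π - s)^2/2) := by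
      rw [abs_mul, abs_neg, abs_of_nonneg e2']
      exact mul_le_mul (hM 0) e2 e2' hM0
    have key : G s - G 0 * Real.cos s = (G s - G π) + (-G 0) * (1 + Real.cos s) := by
      rw [hGpi]; ring
    calc |G s - G 0 * Real.cos s| ≤ |G s - G π| + |(-G 0) * (1 + Real.cos s)| := by
          rw [key]; exact abs_add_le _ _
      _ ≤ L * (π - s) + M * ((π - s)^2/2) := add_le_add e1 e3
      _ ≤ (L + M * π / 4) * (π - s) := by
          nlinarith [mul_nonneg (mul_nonneg hM0 (by linarith : (0:ℝ) ≤ π - s))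
            (by linarith : (0:ℝ) ≤ π/2 - (π - s))]

/-- The fundamental support inequality for the perturbed circle. -/
lemma support_ineq (g : ℝ → ℝ) (hdiff : Differentiable ℝ g)
    (hper : Function.Periodic g (2*π))
    (L M₀ M₁ : ℝ)
    (hlip : ∀ x y, |deriv g x - deriv g y| ≤ L * |x - y|)
    (hM₀ : ∀ x, |g x| ≤ M₀) (hM₁ : ∀ x, |deriv g x| ≤ M₁)
    (hodd' : ∀ x, deriv g (x + π) = -deriv g x)
    (δ : ℝ) (hδ : 0 < δ) (hδ1 : δ * M₀ ≤ 1/4) (hδ2 : δ * (L + M₁ * π/4) ≤ 1/(2*π)) :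
    ∀ θ φ : ℝ, (1/2 + δ * g θ) * Real.cos (φ - θ) + δ * deriv g θ * Real.sin (φ - θ)
      ≤ 1/2 + δ * g φ := by
  intro θ φ
  set c : ℝ := 1/2 + δ * g θ with hc
  have hcge : 1/4 ≤ c := by
    have := (abs_le.mp (hM₀ θ)).1
    have : -(δ * M₀) ≤ δ * g θ := by nlinarith
    simp only [hc]; linarith
  set F : ℝ → ℝ := fun x => 1/2 + δ * g x - c * Real.cos (x - θ) - δ * deriv g θ * Real.sin (x - θ)
    with hF
  have hF' : ∀ x, HasDerivAt F
      (δ * deriv g x + c * Real.sin (x - θ) - δ * deriv g θ * Real.cos (x - θ)) x := by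
    intro x
    have hxθ : HasDerivAt (fun x : ℝ => x - θ) 1 x := (hasDerivAt_id x).sub_const θ
    have hcos : HasDerivAt (fun x => Real.cos (x - θ)) (-Real.sin (x - θ) * 1) x :=
      (Real.hasDerivAt_cos (x - θ)).comp (h := fun x : ℝ => x - θ) x hxθ
    have hsin : HasDerivAt (fun x => Real.sin (x - θ)) (Real.cos (x - θ) * 1) x :=
      (Real.hasDerivAt_sin (x - θ)).comp (h := fun x : ℝ => x - θ) x hxθ
    have h1 : HasDerivAt (fun x => 1/2 + δ * g x) (δ * deriv g x) x :=
      (((hdiff x).hasDerivAt).const_mul δ).const_add (1/2)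
    have := (h1.sub (hcos.const_mul c)).sub (hsin.const_mul (δ * deriv g θ))
    exact this.congr_deriv (by ring)
  have hFdiff : Differentiable ℝ F := fun x => (hF' x).differentiableAt
  have derivpos : ∀ x ∈ Set.Icc θ (θ + π), 0 ≤ deriv F x := by
    intro x hx
    set s : ℝ := x - θ with hs
    have hs0 : 0 ≤ s := by simp only [hs]; linarith [hx.1]
    have hs1 : s ≤ π := by simp only [hs]; linarith [hx.2]
    set G : ℝ → ℝ := fun t => deriv g (θ + t) with hG
    have hGlip : ∀ a b, |G a - G b| ≤ L * |a - b| := by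
      intro a b
      have := hlip (θ + a) (θ + b)
      simpa using this
    have hGM : ∀ t, |G t| ≤ M₁ := fun t => hM₁ _
    have hGA : ∀ t, G (t + π) = -G t := by
      intro t; simp only [hG]
      rw [show θ + (t + π) = (θ + t) + π by ring, hodd' (θ + t)]
    have hb := anti_bound G L M₁ hGlip hGM hGA hs0 hs1
    have hj := jordan hs0 hs1
    have hG0 : G 0 = deriv g θ := by simp [hG]
    have hGs : G s = deriv g x := by simp only [hG, hs]; ring_nf
    rw [(hF' x).deriv]
    have hm0 : 0 ≤ min s (π - s) := le_min hs0 (by linarith)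
    have habs : |δ * (G s - G 0 * Real.cos s)| ≤ (1/(2*π)) * min s (π - s) := by
      rw [abs_mul, abs_of_pos hδ]
      calc δ * |G s - G 0 * Real.cos s| ≤ δ * ((L + M₁ * π / 4) * min s (π - s)) := by
            exact mul_le_mul_of_nonneg_left hb hδ.le
        _ ≤ (1/(2*π)) * min s (π - s) := by
            rw [← mul_assoc]
            exact mul_le_mul_of_nonneg_right hδ2 hm0
    have hsin_low : (1/(2*π)) * min s (π - s) ≤ c * Real.sin s := by
      have h2 : 2 / π * min s (π - s) ≤ Real.sin s := hj
      have hsinpos : 0 ≤ Real.sin s := le_trans (by positivity) h2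
      calc (1/(2*π)) * min s (π - s) = (1/4) * (2/π * min s (π - s)) := by
            field_simp; ring
        _ ≤ (1/4) * Real.sin s := by
            linarith [mul_le_mul_of_nonneg_left h2 (by norm_num : (0:ℝ) ≤ 1/4)]
        _ ≤ c * Real.sin s := mul_le_mul_of_nonneg_right hcge hsinpos
    have hlow := (abs_le.mp habs).1
    have goal_eq : δ * deriv g x + c * Real.sin (x - θ) - δ * deriv g θ * Real.cos (x - θ)
        = δ * (G s - G 0 * Real.cos s) + c * Real.sin s := by
      rw [hGs, hG0, show x - θ = s from rfl]; ring
    rw [goal_eq]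
    clear_value s G c F
    linarith
  have derivneg : ∀ x ∈ Set.Icc (θ - π) θ, deriv F x ≤ 0 := by
    intro x hx
    set s : ℝ := θ - x with hs
    have hs0 : 0 ≤ s := by simp only [hs]; linarith [hx.2]
    have hs1 : s ≤ π := by simp only [hs]; linarith [hx.1]
    set G : ℝ → ℝ := fun t => deriv g (θ - t) with hG
    have hGlip : ∀ a b, |G a - G b| ≤ L * |a - b| := by
      intro a b
      have h := hlip (θ - a) (θ - b)
      rw [show θ - a - (θ - b) = -(a - b) by ring, abs_neg] at h
      simpa using h
    have hGM : ∀ t, |G t| ≤ M₁ := fun t => hM₁ _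
    have hGA : ∀ t, G (t + π) = -G t := by
      intro t; simp only [hG]
      have h1 : deriv g ((θ - t - π) + π) = -deriv g (θ - t - π) := hodd' _
      rw [show θ - t - π + π = θ - t by ring] at h1
      rw [show θ - (t + π) = θ - t - π by ring]
      linarith [h1]
    have hb := anti_bound G L M₁ hGlip hGM hGA hs0 hs1
    have hj := jordan hs0 hs1
    have hG0 : G 0 = deriv g θ := by simp [hG]
    have hGs : G s = deriv g x := by simp only [hG, hs]; ring_nf
    rw [(hF' x).deriv]
    have hm0 : 0 ≤ min s (π - s) := le_min hs0 (by linarith)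
    have habs : |δ * (G s - G 0 * Real.cos s)| ≤ (1/(2*π)) * min s (π - s) := by
      rw [abs_mul, abs_of_pos hδ]
      calc δ * |G s - G 0 * Real.cos s| ≤ δ * ((L + M₁ * π / 4) * min s (π - s)) := by
            exact mul_le_mul_of_nonneg_left hb hδ.le
        _ ≤ (1/(2*π)) * min s (π - s) := by
            rw [← mul_assoc]
            exact mul_le_mul_of_nonneg_right hδ2 hm0
    have hsin_low : (1/(2*π)) * min s (π - s) ≤ c * Real.sin s := by
      have h2 : 2 / π * min s (π - s) ≤ Real.sin s := hj
      have hsinpos : 0 ≤ Real.sin s := le_trans (by positivity) h2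
      calc (1/(2*π)) * min s (π - s) = (1/4) * (2/π * min s (π - s)) := by
            field_simp; ring
        _ ≤ (1/4) * Real.sin s := by
            linarith [mul_le_mul_of_nonneg_left h2 (by norm_num : (0:ℝ) ≤ 1/4)]
        _ ≤ c * Real.sin s := mul_le_mul_of_nonneg_right hcge hsinpos
    have hhigh := (abs_le.mp habs).2
    have hxs : x - θ = -s := by rw [hs]; ring
    have goal_eq : δ * deriv g x + c * Real.sin (x - θ) - δ * deriv g θ * Real.cos (x - θ)
        = δ * (G s - G 0 * Real.cos s) - c * Real.sin s := by
      rw [hGs, hG0, hxs, Real.sin_neg, Real.cos_neg]; ring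
    rw [goal_eq]
    clear_value s G c F
    linarith
  have hmono : MonotoneOn F (Set.Icc θ (θ + π)) :=
    monotoneOn_of_deriv_nonneg (convex_Icc _ _) hFdiff.continuous.continuousOn
      hFdiff.differentiableOn
      (fun x hx => derivpos x (by rw [interior_Icc] at hx; exact ⟨hx.1.le, hx.2.le⟩))
  have hanti : AntitoneOn F (Set.Icc (θ - π) θ) :=
    antitoneOn_of_deriv_nonpos (convex_Icc _ _) hFdiff.continuous.continuousOn
      hFdiff.differentiableOn
      (fun x hx => derivneg x (by rw [interior_Icc] at hx; exact ⟨hx.1.le, hx.2.le⟩))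
  have hFθ : F θ = 0 := by
    have : F θ = 1/2 + δ * g θ - c := by simp [hF]
    rw [this, hc]; ring
  have hFper : Function.Periodic F (2*π) := by
    intro x
    have e : x + 2*π - θ = (x - θ) + 2*π := by ring
    simp only [hF, e, Real.cos_add_two_pi, Real.sin_add_two_pi, hper x]
  obtain ⟨ψ, hψ, hFeq⟩ := hFper.exists_mem_Ico (by positivity) φ (θ - π)
  have hψ2 : ψ ≤ θ + π := by have := hψ.2; linarith
  have hFψ : 0 ≤ F ψ := by
    rcases le_total θ ψ with h|h
    · have := hmono (Set.mem_Icc.mpr ⟨le_refl θ, by linarith [Real.pi_pos]⟩)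
        (Set.mem_Icc.mpr ⟨h, hψ2⟩) h
      linarith [hFθ]
    · have := hanti (Set.mem_Icc.mpr ⟨hψ.1, h⟩)
        (Set.mem_Icc.mpr ⟨by linarith [Real.pi_pos], le_refl θ⟩) h
      linarith [hFθ]
  have : 0 ≤ F φ := by rw [hFeq]; exact hFψ
  simp only [hF] at this
  linarith

/-- The boundary point of the body in direction `θ`, for support value `h` and derivative `h'`. -/
noncomputable def bpt (h h' θ : ℝ) : EuclideanSpace ℝ (Fin 2) :=
  !₂[h * Real.cos θ - h' * Real.sin θ, h * Real.sin θ + h' * Real.cos θ]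

lemma inner_bpt (h h' θ φ : ℝ) :
    (inner ℝ (bpt h h' θ) (u φ) : ℝ) = h * Real.cos (φ - θ) + h' * Real.sin (φ - θ) := by
  rw [inner_u]
  simp only [bpt, Matrix.cons_val_zero, Matrix.cons_val_one, Matrix.head_cons,
    Real.cos_sub, Real.sin_sub]
  ring

/-- Perturbation of a circle: if `g ∈ C^{1,1}(S¹)` satisfies `g(θ+π) = −g(θ)`, then for
all sufficiently small `δ > 0` the function `h = 1/2 + δ g` is the support function of a
convex body of constant width 1, namely `K = ⋂_θ {x : x · u(θ) ≤ h(θ)}`. -/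
theorem perturbation_of_circle (g : ℝ → ℝ)
    (hper : Function.Periodic g (2 * π)) (hC1 : ContDiff ℝ 1 g)
    (hlip : ∃ L : NNReal, LipschitzWith L (deriv g))
    (hodd : ∀ θ : ℝ, g (θ + π) = -g θ) :
    ∃ δ₀ : ℝ, 0 < δ₀ ∧ ∀ δ : ℝ, 0 < δ → δ ≤ δ₀ →
      (⋂ θ : ℝ, {x : EuclideanSpace ℝ (Fin 2) | (inner ℝ x (u θ) : ℝ) ≤ 1/2 + δ * g θ}).Nonempty ∧
      IsCompact (⋂ θ : ℝ, {x : EuclideanSpace ℝ (Fin 2) | (inner ℝ x (u θ) : ℝ) ≤ 1/2 + δ * g θ}) ∧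
      Convex ℝ (⋂ θ : ℝ, {x : EuclideanSpace ℝ (Fin 2) | (inner ℝ x (u θ) : ℝ) ≤ 1/2 + δ * g θ}) ∧
      IsSupportFn (⋂ θ : ℝ, {x : EuclideanSpace ℝ (Fin 2) | (inner ℝ x (u θ) : ℝ) ≤ 1/2 + δ * g θ})
        (fun θ => 1/2 + δ * g θ) ∧
      (∀ θ : ℝ, (1/2 + δ * g θ) + (1/2 + δ * g (θ + π)) = 1) := by
  obtain ⟨L, hL⟩ := hlip
  have hdiff : Differentiable ℝ g := hC1.differentiable one_ne_zero
  have hcont' : Continuous (deriv g) := hC1.continuous_deriv le_rfl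
  have hlip' : ∀ x y, |deriv g x - deriv g y| ≤ (L : ℝ) * |x - y| := by
    intro x y
    have := hL.dist_le_mul x y
    rwa [Real.dist_eq, Real.dist_eq] at this
  have hodd' : ∀ x, deriv g (x + π) = -deriv g x := by
    intro x
    have h1 : deriv (fun y => g (y + π)) x = deriv g (x + π) := deriv_comp_add_const g π x
    have h2 : (fun y => g (y + π)) = fun y => -g y := funext hodd
    rw [h2, deriv.fun_neg] at h1
    linarith
  have hper' : Function.Periodic (deriv g) (2 * π) := by
    intro x
    have h1 : deriv (fun y => g (y + 2 * π)) x = deriv g (x + 2 * π) :=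
      deriv_comp_add_const g (2 * π) x
    have h2 : (fun y => g (y + 2 * π)) = g := funext hper
    rw [h2] at h1
    exact h1.symm
  have hbd : ∀ f : ℝ → ℝ, Continuous f → Function.Periodic f (2 * π) →
      ∃ M : ℝ, 0 ≤ M ∧ ∀ x, |f x| ≤ M := by
    intro f hc hp
    obtain ⟨C, hC⟩ := (isCompact_Icc (a := (0:ℝ)) (b := 2 * π)).exists_bound_of_continuousOn
      hc.continuousOn
    refine ⟨max C 0, le_max_right _ _, fun x => ?_⟩
    obtain ⟨y, hy, hxy⟩ := hp.exists_mem_Ico₀ (by positivity) x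
    rw [hxy]
    calc |f y| = ‖f y‖ := (Real.norm_eq_abs _).symm
      _ ≤ C := hC y ⟨hy.1, hy.2.le⟩
      _ ≤ max C 0 := le_max_left _ _
  obtain ⟨M₀, hM₀0, hM₀⟩ := hbd g hC1.continuous hper
  obtain ⟨M₁, hM₁0, hM₁⟩ := hbd (deriv g) hcont' hper'
  have hL0 : (0:ℝ) ≤ L := L.2
  have hpi : (0:ℝ) < π := Real.pi_pos
  refine ⟨min (1/(4*M₀+1)) (1/(2*π*((L:ℝ)+M₁*π/4)+1)), lt_min (by positivity) (by positivity),
    fun δ hδ hδ0 => ?_⟩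
  have hδ1 : δ * M₀ ≤ 1/4 := by
    have h1 : δ ≤ 1/(4*M₀+1) := le_trans hδ0 (min_le_left _ _)
    have h2 : δ * (4*M₀+1) ≤ 1 := by
      rw [le_div_iff₀ (by positivity)] at h1
      linarith
    nlinarith
  have hδ2 : δ * ((L:ℝ) + M₁ * π/4) ≤ 1/(2*π) := by
    have h1 : δ ≤ 1/(2*π*((L:ℝ)+M₁*π/4)+1) := le_trans hδ0 (min_le_right _ _)
    have h2 : δ * (2*π*((L:ℝ)+M₁*π/4)+1) ≤ 1 := by
      rw [le_div_iff₀ (by positivity)] at h1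
      linarith
    rw [le_div_iff₀ (by positivity)]
    nlinarith
  have hsup := support_ineq g hdiff hper (L:ℝ) M₀ M₁ hlip' hM₀ hM₁ hodd' δ hδ hδ1 hδ2
  have hbnd : ∀ θ, 1/2 + δ * g θ ≤ 1 := by
    intro θ
    have := (abs_le.mp (hM₀ θ)).2
    nlinarith
  set K := ⋂ θ : ℝ, {x : EuclideanSpace ℝ (Fin 2) | (inner ℝ x (u θ) : ℝ) ≤ 1/2 + δ * g θ}
    with hK
  have hmem : ∀ θ, bpt (1/2 + δ * g θ) (δ * deriv g θ) θ ∈ K := by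
    intro θ
    rw [hK, Set.mem_iInter]
    intro φ
    rw [Set.mem_setOf_eq, inner_bpt]
    exact hsup θ φ
  have hval : ∀ θ, (inner ℝ (bpt (1/2 + δ * g θ) (δ * deriv g θ) θ) (u θ) : ℝ)
      = 1/2 + δ * g θ := by
    intro θ
    rw [inner_bpt]
    simp
  have hcoord : ∀ x ∈ K, |x 0| ≤ 1 ∧ |x 1| ≤ 1 := by
    intro x hx
    have key : ∀ θ, x 0 * Real.cos θ + x 1 * Real.sin θ ≤ 1 := by
      intro θ
      have h1 := Set.mem_iInter.mp hx θ
      rw [Set.mem_setOf_eq, inner_u] at h1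
      exact h1.trans (hbnd θ)
    constructor
    · rw [abs_le]
      constructor
      · have := key π; simp at this; linarith
      · have := key 0; simp at this; linarith
    · rw [abs_le]
      constructor
      · have := key (-(π/2)); simp at this; linarith
      · have := key (π/2); simp at this; linarith
  refine ⟨⟨_, hmem 0⟩, ?_, ?_, ?_, ?_⟩
  · have hcl : IsClosed K := by
      rw [hK]
      exact isClosed_iInter fun θ =>
        isClosed_le (Continuous.inner continuous_id continuous_const) continuous_const
    have hsub : K ⊆ Metric.closedBall 0 2 := by
      intro x hx
      obtain ⟨h0, h1⟩ := hcoord x hx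
      rw [Metric.mem_closedBall, dist_zero_right]
      have hn : ‖x‖ = Real.sqrt (‖x 0‖^2 + ‖x 1‖^2) := by
        rw [EuclideanSpace.norm_eq, Fin.sum_univ_two]
      rw [hn]
      have : ‖x 0‖^2 + ‖x 1‖^2 ≤ 4 := by
        rw [Real.norm_eq_abs, Real.norm_eq_abs]
        nlinarith [abs_nonneg (x 0), abs_nonneg (x 1)]
      calc Real.sqrt (‖x 0‖^2 + ‖x 1‖^2) ≤ Real.sqrt 4 := Real.sqrt_le_sqrt this
        _ = 2 := by rw [show (4:ℝ) = 2^2 by norm_num, Real.sqrt_sq (by norm_num)]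
    exact (isCompact_closedBall 0 2).of_isClosed_subset hcl hsub
  · rw [hK]
    exact convex_iInter fun θ => convex_halfSpace_le
      ⟨fun a b => inner_add_left a b _, fun r a => real_inner_smul_left a _ r⟩ _
  · intro θ
    constructor
    · exact ⟨_, hmem θ, hval θ⟩
    · rintro y ⟨x, hx, rfl⟩
      exact Set.mem_iInter.mp hx θ
  · intro θ
    rw [hodd θ]
    ring
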